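/- For any probability distribution q over {0,1}^n, any witness point t ∈ {0,1}^n, and the Gaussian kernel with bandwidth σ, E_{y∼q}[k(y,t)] = E_{a∼P_σ}[(-1)^{a·t} ⟨Z_a⟩_q], where P_σ(a) = (1-p_σ)^{n-|a|} p_σ^{|a|}, p_σ = (1-e^{-1/(2σ²)})/2, and ⟨Z_a⟩_q = E_{y∼q}[(-1)^{a·y}]. -/

import Mathlib

open Finset Matrix

noncomputable section

abbrev Bits (n : ℕ) := Fin n → Bool

def bdot {n : ℕ} (a z : Bits n) : ℕ := (Finset.univ.filter fun i => a i ∧ z i).card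

def wt {n : ℕ} (a : Bits n) : ℕ := (Finset.univ.filter fun i => a i).card

def Zword {n : ℕ} (a : Bits n) : Matrix (Bits n) (Bits n) ℂ :=
  Matrix.diagonal fun z => (-1 : ℂ) ^ bdot a z

def Xword {n : ℕ} (g : Bits n) : Matrix (Bits n) (Bits n) ℂ :=
  Matrix.of fun x y => if (fun i => xor (y i) (g i)) = x then 1 else 0

def gateX {n : ℕ} (θ : ℝ) (g : Bits n) : Matrix (Bits n) (Bits n) ℂ :=
  NormedSpace.exp ((Complex.I * (θ : ℂ)) • Xword g)

def gateZ {n : ℕ} (θ : ℝ) (g : Bits n) : Matrix (Bits n) (Bits n) ℂ :=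
  NormedSpace.exp ((Complex.I * (θ : ℂ)) • Zword g)

def Ucirc {n m : ℕ} (θ : Fin m → ℝ) (g : Fin m → Bits n) : Matrix (Bits n) (Bits n) ℂ :=
  (List.ofFn fun j => gateX (θ j) (g j)).prod

def zeroBits (n : ℕ) : Bits n := fun _ => false

/-- for any probability distribution q on {0,1}ⁿ and witness point t,
E_{y∼q}[k(y,t)] = E_{a∼P_σ}[(-1)^{a·t} ⟨Z_a⟩_q] for the Gaussian kernel with
bandwidth σ. -/
theorem kernel_witness_expectation {n : ℕ} (σ : ℝ) (hσ : 0 < σ) (q : Bits n → ℝ)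
    (hq0 : ∀ y, 0 ≤ q y) (hq1 : ∑ y, q y = 1) (t : Bits n) :
    let pσ : ℝ := (1 - Real.exp (-(1 / (2 * σ ^ 2)))) / 2
    ∑ y : Bits n, q y * Real.exp (-(hammingDist y t : ℝ) / (2 * σ ^ 2))
      = ∑ a : Bits n, (1 - pσ) ^ (n - wt a) * pσ ^ (wt a) * (-1 : ℝ) ^ bdot a t *
          (∑ y : Bits n, q y * (-1 : ℝ) ^ bdot a y) := by

  intro pσ
  have hpσ : pσ = (1 - Real.exp (-(1 / (2 * σ ^ 2)))) / 2 := rfl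
  set c := Real.exp (-(1 / (2 * σ ^ 2))) with hc
  -- sign as a product
  have sign_prod : ∀ (a z : Bits n),
      (-1 : ℝ) ^ bdot a z = ∏ i, (if a i ∧ z i then (-1 : ℝ) else 1) := by
    intro a z
    rw [Finset.prod_ite, Finset.prod_const, Finset.prod_const, one_pow, mul_one, bdot]
  -- weight as a product
  have wt_prod : ∀ a : Bits n,
      (1 - pσ) ^ (n - wt a) * pσ ^ (wt a) = ∏ i, (if a i then pσ else 1 - pσ) := by
    intro a
    rw [Finset.prod_ite, Finset.prod_const, Finset.prod_const]
    have hcard : (Finset.univ.filter fun i => a i).card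
        + (Finset.univ.filter fun i => ¬ a i).card = n := by
      simpa using Finset.card_filter_add_card_filter_not
        (s := (Finset.univ : Finset (Fin n))) (p := fun i => a i = true)
    have hwt : wt a = (Finset.univ.filter fun i => a i = true).card := rfl
    have : (Finset.univ.filter fun i => ¬ a i).card = n - wt a := by
      rw [hwt]; omega
    rw [this, wt, mul_comm]
  have hsum : ∀ y : Bits n,
      (∑ a : Bits n, (1 - pσ) ^ (n - wt a) * pσ ^ (wt a) * (-1 : ℝ) ^ bdot a t *
        (-1 : ℝ) ^ bdot a y) = c ^ hammingDist y t := by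
    intro y
    have key : ∀ a : Bits n,
        (1 - pσ) ^ (n - wt a) * pσ ^ (wt a) * (-1 : ℝ) ^ bdot a t * (-1 : ℝ) ^ bdot a y
          = ∏ i, ((if a i then pσ else 1 - pσ) * (if a i ∧ t i then (-1 : ℝ) else 1) *
              (if a i ∧ y i then (-1 : ℝ) else 1)) := by
      intro a
      rw [Finset.prod_mul_distrib, Finset.prod_mul_distrib, ← wt_prod a, ← sign_prod a t,
        ← sign_prod a y]
    calc (∑ a : Bits n, (1 - pσ) ^ (n - wt a) * pσ ^ (wt a) * (-1 : ℝ) ^ bdot a t *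
            (-1 : ℝ) ^ bdot a y)
        = ∑ a : Bits n,
            ∏ i, ((if a i then pσ else 1 - pσ) * (if a i ∧ t i then (-1 : ℝ) else 1) *
              (if a i ∧ y i then (-1 : ℝ) else 1)) :=
          Finset.sum_congr rfl fun a _ => key a
      _ = ∏ i, ∑ b : Bool, ((if b then pσ else 1 - pσ) * (if b ∧ t i then (-1 : ℝ) else 1) *
              (if b ∧ y i then (-1 : ℝ) else 1)) :=
          (Fintype.prod_sum (κ := fun _ : Fin n => Bool)
            (fun i b => (if b then pσ else 1 - pσ) * (if b ∧ t i then (-1 : ℝ) else 1) *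
              (if b ∧ y i then (-1 : ℝ) else 1))).symm
      _ = ∏ i, (if y i = t i then 1 else c) := by
          refine Finset.prod_congr rfl fun i _ => ?_
          rw [Fintype.sum_bool]
          cases hti : t i <;> cases hyi : y i <;> simp [hpσ] <;> try ring
      _ = c ^ hammingDist y t := by
          rw [Finset.prod_ite, Finset.prod_const, Finset.prod_const, one_pow, one_mul]
          congr 1
          try simp [hammingDist, Ne, eq_comm]
  calc ∑ y : Bits n, q y * Real.exp (-(hammingDist y t : ℝ) / (2 * σ ^ 2))
      = ∑ y : Bits n, q y * c ^ hammingDist y t := by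
        refine Finset.sum_congr rfl fun y _ => ?_
        congr 1
        rw [hc, ← Real.exp_nat_mul]
        congr 1
        ring
    _ = ∑ y : Bits n, q y * (∑ a : Bits n, (1 - pσ) ^ (n - wt a) * pσ ^ (wt a) *
          (-1 : ℝ) ^ bdot a t * (-1 : ℝ) ^ bdot a y) := by
        refine Finset.sum_congr rfl fun y _ => ?_
        rw [hsum y]
    _ = ∑ a : Bits n, (1 - pσ) ^ (n - wt a) * pσ ^ (wt a) * (-1 : ℝ) ^ bdot a t *
          (∑ y : Bits n, q y * (-1 : ℝ) ^ bdot a y) := by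
        simp_rw [Finset.mul_sum]
        rw [Finset.sum_comm]
        refine Finset.sum_congr rfl fun a _ => Finset.sum_congr rfl fun y _ => ?_
        ring
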